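/- Let D be an endomorphism of a complex vector space L with Jordan decomposition D = D_s + D_n. Then for the generalized eigenspace decomposition of D, one has: if a bilinear bracket on L satisfies [L^λ, L^μ] ⊆ L^{λ+μ} for all λ, μ (where L^λ is the generalized λ-eigenspace of D), then D_s is a derivation of the bracket. -/

import Mathlib

open Module.End Set

lemma ds_smul (L : Type*) [AddCommGroup L] [Module ℂ L] [FiniteDimensional ℂ L]
    (D Ds Dn : Module.End ℂ L)
    (hs : Ds.IsSemisimple) (hn : IsNilpotent Dn) (hcomm : Commute Ds Dn)
    (hsum : D = Ds + Dn) (lam : ℂ) {x : L} (hx : x ∈ D.maxGenEigenspace lam) :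
    Ds x = lam • x := by
  have hDDs : Commute D Ds := by rw [hsum]; exact (Commute.refl Ds).add_left hcomm.symm
  have hDDn : Commute D Dn := by rw [hsum]; exact hcomm.add_left (Commute.refl Dn)
  set p := D.maxGenEigenspace lam with hp
  have hms : MapsTo Ds p p := mapsTo_maxGenEigenspace_of_comm hDDs lam
  have hmn : MapsTo Dn p p := mapsTo_maxGenEigenspace_of_comm hDDn lam
  have hmA : MapsTo (D - algebraMap ℂ (Module.End ℂ L) lam) p p :=
    mapsTo_maxGenEigenspace_of_comm (Algebra.mul_sub_algebraMap_commutes D lam) lam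
  set g : Module.End ℂ p := Ds.restrict hms with hg
  have hginv : p ∈ Ds.invtSubmodule := by
    rw [Module.End.mem_invtSubmodule]; exact fun z hz => hms hz
  have hgsemi : g.IsSemisimple := hs.restrict hginv
  have hgsub : (g - algebraMap ℂ (Module.End ℂ p) lam).IsSemisimple := by
    rwa [isSemisimple_sub_algebraMap_iff]
  have hA : IsNilpotent ((D - algebraMap ℂ (Module.End ℂ L) lam).restrict hmA) :=
    isNilpotent_restrict_maxGenEigenspace_sub_algebraMap D lam
  have hN : IsNilpotent (Dn.restrict hmn) := isNilpotent.restrict hmn hn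
  have hANcomm : Commute ((D - algebraMap ℂ (Module.End ℂ L) lam).restrict hmA)
      (Dn.restrict hmn) := by
    ext z
    have : Commute (D - algebraMap ℂ (Module.End ℂ L) lam) Dn :=
      hDDn.sub_left (Algebra.commute_algebraMap_left lam Dn)
    exact LinearMap.congr_fun this z
  have hnil : IsNilpotent (g - algebraMap ℂ (Module.End ℂ p) lam) := by
    have heq : g - algebraMap ℂ (Module.End ℂ p) lam
        = (D - algebraMap ℂ (Module.End ℂ L) lam).restrict hmA - Dn.restrict hmn := by
      ext z
      have e1 : ((Ds.restrict hms z : p) : L) = Ds z := rfl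
      have e2 : ((Dn.restrict hmn z : p) : L) = Dn z := rfl
      simp [e1, e2, g, LinearMap.restrict_apply, LinearMap.restrict_coe_apply, hsum, Module.algebraMap_end_apply, sub_sub,
        add_sub_cancel_right, add_sub_assoc, sub_eq_add_neg]
      abel
    rw [heq]
    exact hANcomm.isNilpotent_sub hA hN
  have hzero : g - algebraMap ℂ (Module.End ℂ p) lam = 0 :=
    Module.End.eq_zero_of_isNilpotent_isSemisimple hnil hgsub
  have := LinearMap.congr_fun hzero ⟨x, hx⟩
  exact (by simpa [g, LinearMap.restrict_apply, LinearMap.restrict_coe_apply, Subtype.ext_iff, Module.algebraMap_end_apply,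
    sub_eq_zero] using this : ((g ⟨x, hx⟩ : p) : L) = lam • x)

theorem stmt_15 (L : Type*) [AddCommGroup L] [Module ℂ L] [FiniteDimensional ℂ L]
    (D Ds Dn : Module.End ℂ L)
    (hs : Ds.IsSemisimple) (hn : IsNilpotent Dn) (hcomm : Commute Ds Dn)
    (hsum : D = Ds + Dn)
    (B : L →ₗ[ℂ] L →ₗ[ℂ] L)
    (hB : ∀ (lam mu : ℂ) (x y : L), x ∈ D.maxGenEigenspace lam →
      y ∈ D.maxGenEigenspace mu → B x y ∈ D.maxGenEigenspace (lam + mu)) :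
    ∀ x y : L, Ds (B x y) = B (Ds x) y + B x (Ds y) := by
  have key : ∀ (lam : ℂ) {x : L}, x ∈ D.maxGenEigenspace lam → Ds x = lam • x :=
    fun lam {x} hx => ds_smul L D Ds Dn hs hn hcomm hsum lam hx
  have htop := D.iSup_maxGenEigenspace_eq_top
  intro x y
  have hx : x ∈ ⨆ lam : ℂ, D.maxGenEigenspace lam := htop ▸ Submodule.mem_top
  have hy : y ∈ ⨆ mu : ℂ, D.maxGenEigenspace mu := htop ▸ Submodule.mem_top
  induction hx using Submodule.iSup_induction' with
  | mem lam x hx =>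
    induction hy using Submodule.iSup_induction' with
    | mem mu y hy =>
      rw [key lam hx, key mu hy, key (lam + mu) (hB lam mu x y hx hy)]
      simp only [map_smul, LinearMap.smul_apply, add_smul]
    | zero => simp
    | add y z hy hz ihy ihz => simp only [map_add, ihy, ihz]; abel
  | zero => simp
  | add x z hx hz ihx ihz => simp only [map_add, LinearMap.add_apply, ihx, ihz]; abel
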